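/- Let L ≥ 1, let h, g ∈ ℂ^L, let φ = arg⟪h, g⟫, let υ ∈ ℝ, and let d₁, d₂ ∈ ℂ be nonzero. Then, with the PR preprocessing u₁ = exp(i(υ + φ)) and u₂ = 1, ‖d₁ • g + (exp(i(υ + φ))·d₂) • h‖² ≥ min(‖h‖², ‖g‖²)·(min(|d₁|, |d₂|))²·2·(1 − |cos(arg d₂ − arg d₁ + υ)|). (Inequality (24) in Appendix A: after pre-canceling the effective angle φ, the decision-distance lower bound depends only on υ and the symbol differences.) -/

import Mathlib

lemma aux_decdist (x y m c t : ℝ) (hx : m ≤ x) (hy : m ≤ y) (hm : 0 ≤ m)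
    (hc0 : 0 ≤ c) (hc1 : c ≤ 1) (ht : -(x * y * c) ≤ t) :
    m ^ 2 * (2 * (1 - c)) ≤ x ^ 2 + y ^ 2 + 2 * t := by
  have h1 : 0 ≤ (1 - c) * (x ^ 2 - m ^ 2) :=
    mul_nonneg (by linarith) (by nlinarith)
  have h2 : 0 ≤ (1 - c) * (y ^ 2 - m ^ 2) :=
    mul_nonneg (by linarith) (by nlinarith)
  have h3 : 0 ≤ c * (x - y) ^ 2 := mul_nonneg hc0 (sq_nonneg _)
  nlinarith [h1, h2, h3, ht]

set_option maxHeartbeats 1000000 in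
theorem decision_distance_pr_lower_bound
    (L : ℕ) (hL : 1 ≤ L) (h g : EuclideanSpace ℂ (Fin L))
    (φ : ℝ) (hφ : φ = Complex.arg (inner ℂ h g : ℂ))
    (υ : ℝ) (d₁ d₂ : ℂ) (hd₁ : d₁ ≠ 0) (hd₂ : d₂ ≠ 0) :
    ‖d₁ • g + (Complex.exp (Complex.I * (υ + φ)) * d₂) • h‖ ^ 2 ≥
      min (‖h‖ ^ 2) (‖g‖ ^ 2) * (min ‖d₁‖ ‖d₂‖) ^ 2 *
        (2 * (1 - |Real.cos (d₂.arg - d₁.arg + υ)|)) := by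
  have hconj : ∀ w : ℂ, (starRingEnd ℂ) w
      = (‖w‖ : ℂ) * Complex.exp ((-(w.arg) : ℝ) * Complex.I) := by
    intro w
    nth_rewrite 1 [← Complex.norm_mul_exp_arg_mul_I w]
    rw [map_mul, Complex.conj_ofReal, ← Complex.exp_conj, map_mul, Complex.conj_I,
      Complex.conj_ofReal]
    push_cast
    ring_nf
  have key : (inner ℂ (d₁ • g) ((Complex.exp (Complex.I * (υ + φ)) * d₂) • h) : ℂ)
      = ((‖(inner ℂ h g : ℂ)‖) * ‖d₁‖ * ‖d₂‖ : ℝ) *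
        Complex.exp ((d₂.arg - d₁.arg + υ : ℝ) * Complex.I) := by
    rw [inner_smul_left, inner_smul_right, ← inner_conj_symm g h, hconj d₁,
      hconj (inner ℂ h g : ℂ), hφ]
    nth_rewrite 1 [← Complex.norm_mul_exp_arg_mul_I d₂]
    rw [show ((d₂.arg - d₁.arg + υ : ℝ) : ℂ) * Complex.I
        = ((-(d₁.arg) : ℝ) : ℂ) * Complex.I + Complex.I * (υ + (inner ℂ h g : ℂ).arg)
          + ((d₂.arg : ℝ) : ℂ) * Complex.I + ((-(inner ℂ h g : ℂ).arg : ℝ) : ℂ) * Complex.I by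
        push_cast; ring,
      Complex.exp_add, Complex.exp_add, Complex.exp_add]
    push_cast
    ring
  have expand := @norm_add_sq ℂ _ _ _ _ (d₁ • g) ((Complex.exp (Complex.I * (υ + φ)) * d₂) • h)
  rw [key, RCLike.re_to_complex] at expand
  set θ : ℝ := d₂.arg - d₁.arg + υ with hθ
  set r : ℝ := ‖(inner ℂ h g : ℂ)‖ with hr
  have hre : Complex.re ((r * ‖d₁‖ * ‖d₂‖ : ℝ) * Complex.exp ((θ : ℝ) * Complex.I))
      = r * ‖d₁‖ * ‖d₂‖ * Real.cos θ := by
    rw [Complex.exp_mul_I]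
    simp [Complex.add_re, Complex.mul_re, Complex.cos_ofReal_re, Complex.sin_ofReal_im,
      Complex.ofReal_re, Complex.ofReal_im]
  rw [hre] at expand
  have hn1 : ‖d₁ • g‖ = ‖d₁‖ * ‖g‖ := by simp [norm_smul]
  have hn2 : ‖(Complex.exp (Complex.I * (υ + φ)) * d₂) • h‖ = ‖d₂‖ * ‖h‖ := by
    simp only [norm_smul, norm_mul]
    rw [show Complex.I * (↑υ + ↑φ) = ((υ + φ : ℝ) : ℂ) * Complex.I by push_cast; ring,
      Complex.norm_exp_ofReal_mul_I]
    ring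
  rw [hn1, hn2] at expand
  rw [expand]
  have hcs : r ≤ ‖h‖ * ‖g‖ := by
    simpa [hr] using norm_inner_le_norm (𝕜 := ℂ) h g
  have hr0 : 0 ≤ r := norm_nonneg _
  have hc1 : |Real.cos θ| ≤ 1 := Real.abs_cos_le_one θ
  have hc0 : Real.cos θ ≥ -|Real.cos θ| := neg_abs_le _
  have hd1 : (0:ℝ) ≤ ‖d₁‖ := norm_nonneg _
  have hd2 : (0:ℝ) ≤ ‖d₂‖ := norm_nonneg _
  have hg0 : (0:ℝ) ≤ ‖g‖ := norm_nonneg _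
  have hh0 : (0:ℝ) ≤ ‖h‖ := norm_nonneg _
  have hcross : 2 * (r * ‖d₁‖ * ‖d₂‖ * Real.cos θ)
      ≥ -(2 * (‖h‖ * ‖g‖ * (‖d₁‖ * ‖d₂‖) * |Real.cos θ|)) := by
    nlinarith [mul_nonneg (mul_nonneg hd1 hd2) (abs_nonneg (Real.cos θ)),
      mul_le_mul_of_nonneg_right hcs (mul_nonneg (mul_nonneg hd1 hd2) (abs_nonneg (Real.cos θ))),
      mul_le_mul_of_nonneg_left hc0 (mul_nonneg (mul_nonneg hr0 hd1) hd2)]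
  have ht : -(‖d₁‖ * ‖g‖ * (‖d₂‖ * ‖h‖) * |Real.cos θ|)
      ≤ r * ‖d₁‖ * ‖d₂‖ * Real.cos θ := by
    nlinarith [hcross]
  rcases le_total (‖h‖) (‖g‖) with hm | hm <;>
    rcases le_total (‖d₁‖) (‖d₂‖) with hd | hd <;>
    [ (rw [min_eq_left (by nlinarith), min_eq_left hd]);
      (rw [min_eq_left (by nlinarith), min_eq_right hd]);
      (rw [min_eq_right (by nlinarith), min_eq_left hd]);
      (rw [min_eq_right (by nlinarith), min_eq_right hd])]
  · nlinarith [aux_decdist (‖d₁‖ * ‖g‖) (‖d₂‖ * ‖h‖) (‖d₁‖ * ‖h‖)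
      |Real.cos θ| (r * ‖d₁‖ * ‖d₂‖ * Real.cos θ)
      (by nlinarith) (by nlinarith) (mul_nonneg hd1 hh0) (abs_nonneg _) hc1 ht]
  · nlinarith [aux_decdist (‖d₁‖ * ‖g‖) (‖d₂‖ * ‖h‖) (‖d₂‖ * ‖h‖)
      |Real.cos θ| (r * ‖d₁‖ * ‖d₂‖ * Real.cos θ)
      (by nlinarith) (by nlinarith) (mul_nonneg hd2 hh0) (abs_nonneg _) hc1 ht]
  · nlinarith [aux_decdist (‖d₁‖ * ‖g‖) (‖d₂‖ * ‖h‖) (‖d₁‖ * ‖g‖)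
      |Real.cos θ| (r * ‖d₁‖ * ‖d₂‖ * Real.cos θ)
      (by nlinarith) (by nlinarith) (mul_nonneg hd1 hg0) (abs_nonneg _) hc1 ht]
  · nlinarith [aux_decdist (‖d₁‖ * ‖g‖) (‖d₂‖ * ‖h‖) (‖d₂‖ * ‖g‖)
      |Real.cos θ| (r * ‖d₁‖ * ‖d₂‖ * Real.cos θ)
      (by nlinarith) (by nlinarith) (mul_nonneg hd2 hg0) (abs_nonneg _) hc1 ht]
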